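/- Let X be a Tychonoff space in which every compact subset is finite, let {U_n : n ∈ ℕ} be a family of pairwise disjoint open subsets of X. Then the set K = {0} ∪ {1_{U_n} : n ∈ ℕ}, consisting of the zero function together with the indicator functions of the sets U_n, is a compact subset of C(X) endowed with the compact-open topology. -/

import Mathlib

/-- If every compact subset of a Tychonoff space `X` is finite and `(U n)` are pairwise
disjoint clopen subsets of `X`, then the set consisting of the zero function and the
indicator functions of the sets `U n` is compact in `C(X,ℝ)` with the compact-open topology. -/
theorem stmt_5 {X : Type*} [TopologicalSpace X] [T2Space X] [CompletelyRegularSpace X]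
    (hcpt : ∀ K : Set X, IsCompact K → K.Finite)
    (U : ℕ → Set X) (hclopen : ∀ n, IsClopen (U n))
    (hdisj : ∀ m n, m ≠ n → Disjoint (U m) (U n))
    (f : ℕ → C(X, ℝ)) (hf : ∀ n x, f n x = (U n).indicator 1 x) :
    IsCompact ({0} ∪ Set.range f : Set C(X, ℝ)) := by
  have htend : Filter.Tendsto f Filter.atTop (nhds (0 : C(X, ℝ))) := by
    rw [ContinuousMap.tendsto_iff_forall_isCompact_tendstoUniformlyOn]
    intro K hK
    have hKfin : K.Finite := hcpt K hK
    -- the set of indices whose set meets K is finite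
    have hS : {n : ℕ | (U n ∩ K).Nonempty}.Finite := by
      have hsub : {n : ℕ | (U n ∩ K).Nonempty} ⊆ ⋃ x ∈ K, {n | x ∈ U n} := by
        rintro n ⟨x, hxU, hxK⟩
        exact Set.mem_biUnion hxK hxU
      refine Set.Finite.subset (hKfin.biUnion fun x _ => ?_) hsub
      refine Set.Subsingleton.finite fun m hm n hn => ?_
      by_contra hmn
      exact (hdisj m n hmn).ne_of_mem hm hn rfl
    rw [Metric.tendstoUniformlyOn_iff]
    intro ε hε
    have hcof : ∀ᶠ n in Filter.atTop, n ∉ {n : ℕ | (U n ∩ K).Nonempty} := by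
      rw [← Nat.cofinite_eq_atTop]
      exact hS.eventually_cofinite_notMem
    filter_upwards [hcof] with n hn x hx
    have hxU : x ∉ U n := fun h => hn ⟨x, h, hx⟩
    have : f n x = 0 := by rw [hf n x, Set.indicator_of_notMem hxU]
    simpa [this] using hε
  have h := htend.isCompact_insert_range
  rwa [Set.insert_eq] at h
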